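/- Let Q be a quantale and γ ∈ Q with γ ≠ ⊤. Assume (a) γ * α ⊔ α * γ ≤ α for all α ∈ Q, and (b) for all α ∈ Q and all β ∈ Q with β ≰ γ one has ⊤ * α ≤ (β * α) ⊔ α and α * ⊤ ≤ (α * β) ⊔ α. Then there exist a unital quantale M with unit e and a map ι : Q → M which is injective, multiplicative (ι (p * q) = ι p * ι q for all p, q ∈ Q), preserves arbitrary suprema and preserves nonempty infima, such that: every element of M lies in range ι ∪ {e, ⊤_M}; e ∉ range ι, ⊤_M ∉ range ι, e ≠ ⊤_M; {m ∈ M | m ≤ e} \ {e} = {m ∈ M | m ≤ ι γ}; and {m ∈ M | e ≤ m} \ {e} = {⊤_M}. -/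

import Mathlib

set_option linter.unusedSectionVars false

open Classical Set

attribute [-instance] instLEOption

namespace Stmt10

variable {Q : Type*} [CompleteLattice Q]

/-- `none` is the new top, `some none` is the new unit `e`,
`some (some q)` is the copy of `q : Q`. -/
abbrev M (Q : Type*) := Option (Option Q)

def Mle (γ : Q) : M Q → M Q → Prop
  | none, none => True
  | none, some _ => False
  | some _, none => True
  | some none, some none => True
  | some none, some (some _) => False
  | some (some p), some none => p ≤ γ
  | some (some p), some (some q) => p ≤ q

def MPO (γ : Q) : PartialOrder (M Q) where
  le := Mle γ
  lt a b := Mle γ a b ∧ ¬ Mle γ b a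
  lt_iff_le_not_ge _ _ := Iff.rfl
  le_refl := by rintro (_|_|q) <;> simp [Mle]
  le_trans := by
    rintro (_|_|a) (_|_|b) (_|_|c) h1 h2 <;>
      simp_all only [Mle] <;> try exact le_trans h1 h2
  le_antisymm := by
    rintro (_|_|a) (_|_|b) h1 h2 <;> simp_all only [Mle]
    exact congrArg (some ∘ some) (le_antisymm h1 h2)

noncomputable def Msup (γ : Q) (A : Set (M Q)) : M Q :=
  if none ∈ A ∨ (some none ∈ A ∧ ∃ q, some (some q) ∈ A ∧ ¬ q ≤ γ) then none
  else if some none ∈ A then some none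
  else some (some (sSup {q | some (some q) ∈ A}))

lemma Msup_isLUB (γ : Q) (A : Set (M Q)) :
    letI := MPO γ; IsLUB A (Msup γ A) := by
  letI := MPO γ
  unfold Msup
  split_ifs with h1 h2
  · constructor
    · rintro (_|_|a) _
      · exact (trivial : Mle γ none none)
      · exact (trivial : Mle γ (some none) none)
      · exact (trivial : Mle γ (some (some a)) none)
    · rcases h1 with h | ⟨he, q, hq, hqγ⟩
      · rintro (_|_|b) hb
        · exact (trivial : Mle γ none none)
        · exact absurd (hb h : Mle γ none (some none)) id
        · exact absurd (hb h : Mle γ none (some (some b))) id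
      · rintro (_|_|b) hb
        · exact (trivial : Mle γ none none)
        · exact absurd (hb hq : Mle γ (some (some q)) (some none)) hqγ
        · exact absurd (hb he : Mle γ (some none) (some (some b))) id
  · push_neg at h1
    constructor
    · rintro (_|_|a) haA
      · exact absurd haA h1.1
      · exact (trivial : Mle γ (some none) (some none))
      · exact (h1.2 h2 a haA : Mle γ (some (some a)) (some none))
    · rintro (_|_|b) hb
      · exact (trivial : Mle γ (some none) none)
      · exact (trivial : Mle γ (some none) (some none))
      · exact absurd (hb h2 : Mle γ (some none) (some (some b))) id
  · push_neg at h1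
    constructor
    · rintro (_|_|a) haA
      · exact absurd haA h1.1
      · exact absurd haA h2
      · exact (le_sSup haA :
          Mle γ (some (some a)) (some (some (sSup {q | some (some q) ∈ A}))))
    · rintro (_|_|b) hb
      · exact (trivial : Mle γ (some (some (sSup {q | some (some q) ∈ A}))) none)
      · exact (sSup_le fun q hq => (hb hq : Mle γ (some (some q)) (some none)) :
          Mle γ (some (some (sSup {q | some (some q) ∈ A}))) (some none))
      · exact (sSup_le fun q hq => (hb hq : Mle γ (some (some q)) (some (some b))) :
          Mle γ (some (some (sSup {q | some (some q) ∈ A}))) (some (some b)))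

noncomputable def MCL (γ : Q) : CompleteLattice (M Q) :=
  letI := MPO γ
  letI : SupSet (M Q) := ⟨Msup γ⟩
  completeLatticeOfSup (M Q) (Msup_isLUB γ)

variable {γ : Q}

@[simp] lemma Mle_x_none (x : M Q) : Mle γ x none := by rcases x with _|_|q <;> trivial
@[simp] lemma Mle_none_some (x : Option Q) : ¬ Mle γ none (some x) := by rcases x <;> exact id
@[simp] lemma Mle_e_e : Mle γ (some none) (some none) := trivial
@[simp] lemma Mle_e_i (q : Q) : ¬ Mle γ (some none) (some (some q)) := id
@[simp] lemma Mle_i_e (p : Q) : Mle γ (some (some p)) (some none) ↔ p ≤ γ := Iff.rfl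
@[simp] lemma Mle_i_i (p q : Q) : Mle γ (some (some p)) (some (some q)) ↔ p ≤ q := Iff.rfl

section
variable (mul : Q → Q → Q)

def Mmul : M Q → M Q → M Q
  | some none, m => m
  | m, some none => m
  | none, none => none
  | none, some (some q) => some (some (mul ⊤ q ⊔ q))
  | some (some q), none => some (some (mul q ⊤ ⊔ q))
  | some (some p), some (some q) => some (some (mul p q))

@[simp] lemma Mmul_e_left (m : M Q) : Mmul mul (some none) m = m := by
  rcases m with _|_|q <;> rfl
@[simp] lemma Mmul_e_right (m : M Q) : Mmul mul m (some none) = m := by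
  rcases m with _|_|q <;> rfl
@[simp] lemma Mmul_top_top : Mmul mul none none = none := rfl
@[simp] lemma Mmul_top_i (q : Q) :
    Mmul mul none (some (some q)) = some (some (mul ⊤ q ⊔ q)) := rfl
@[simp] lemma Mmul_i_top (q : Q) :
    Mmul mul (some (some q)) none = some (some (mul q ⊤ ⊔ q)) := rfl
@[simp] lemma Mmul_i_i (p q : Q) :
    Mmul mul (some (some p)) (some (some q)) = some (some (mul p q)) := rfl

variable (hsSup_left : ∀ (A : Set Q) (b : Q), mul (sSup A) b = ⨆ a ∈ A, mul a b)
  (hsSup_right : ∀ (A : Set Q) (b : Q), mul b (sSup A) = ⨆ a ∈ A, mul b a)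

include hsSup_left hsSup_right

lemma qmul_sup_left (a b c : Q) : mul (a ⊔ b) c = mul a c ⊔ mul b c := by
  have h := hsSup_left {a, b} c
  rw [sSup_pair] at h
  rw [h, iSup_pair]

lemma qmul_sup_right (a b c : Q) : mul c (a ⊔ b) = mul c a ⊔ mul c b := by
  have h := hsSup_right {a, b} c
  rw [sSup_pair] at h
  rw [h, iSup_pair]

lemma qmul_mono_left {a b : Q} (c : Q) (h : a ≤ b) : mul a c ≤ mul b c := by
  have h2 : mul a c ⊔ mul b c = mul b c := by
    rw [← qmul_sup_left mul hsSup_left hsSup_right, sup_eq_right.2 h]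
  exact h2 ▸ le_sup_left

lemma qmul_mono_right {a b : Q} (c : Q) (h : a ≤ b) : mul c a ≤ mul c b := by
  have h2 : mul c a ⊔ mul c b = mul c b := by
    rw [← qmul_sup_right mul hsSup_left hsSup_right, sup_eq_right.2 h]
  exact h2 ▸ le_sup_left

lemma Mmul_mono_left (ha : ∀ α : Q, mul γ α ⊔ mul α γ ≤ α)
    {a a' : M Q} (b : M Q) (h : Mle γ a a') :
    Mle γ (Mmul mul a b) (Mmul mul a' b) := by
  rcases a with _|_|p <;> rcases a' with _|_|p' <;> rcases b with _|_|r <;>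
    simp only [Mmul_e_left, Mmul_e_right, Mmul_top_top, Mmul_top_i, Mmul_i_top,
      Mmul_i_i, Mle_x_none, Mle_e_e, Mle_i_e, Mle_i_i] <;>
    first
      | trivial
      | exact (Mle_none_some _ h).elim
      | exact (Mle_e_i _ h).elim
      | exact h
      | exact le_sup_right
      | exact (qmul_mono_left mul hsSup_left hsSup_right r le_top).trans le_sup_left
      | exact qmul_mono_left mul hsSup_left hsSup_right r h
      | exact (qmul_mono_left mul hsSup_left hsSup_right r h).trans (le_sup_left.trans (ha r))
      | exact sup_le ((qmul_mono_left mul hsSup_left hsSup_right ⊤ h).trans le_sup_left)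
          (le_trans h le_sup_right)

lemma Mmul_mono_right (ha : ∀ α : Q, mul γ α ⊔ mul α γ ≤ α)
    {b b' : M Q} (a : M Q) (h : Mle γ b b') :
    Mle γ (Mmul mul a b) (Mmul mul a b') := by
  rcases a with _|_|p <;> rcases b with _|_|r <;> rcases b' with _|_|r' <;>
    simp only [Mmul_e_left, Mmul_e_right, Mmul_top_top, Mmul_top_i, Mmul_i_top,
      Mmul_i_i, Mle_x_none, Mle_e_e, Mle_i_e, Mle_i_i] <;>
    first
      | trivial
      | exact (Mle_none_some _ h).elim
      | exact (Mle_e_i _ h).elim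
      | exact h
      | exact le_sup_right
      | exact (qmul_mono_right mul hsSup_left hsSup_right p le_top).trans le_sup_left
      | exact qmul_mono_right mul hsSup_left hsSup_right p h
      | exact (qmul_mono_right mul hsSup_left hsSup_right p h).trans (le_sup_right.trans (ha p))
      | exact sup_le ((qmul_mono_right mul hsSup_left hsSup_right ⊤ h).trans le_sup_left)
          (le_trans h le_sup_right)

lemma Mmul_assoc (hassoc : ∀ a b c : Q, mul (mul a b) c = mul a (mul b c))
    (a b c : M Q) : Mmul mul (Mmul mul a b) c = Mmul mul a (Mmul mul b c) := by
  have hsl := qmul_sup_left mul hsSup_left hsSup_right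
  have hsr := qmul_sup_right mul hsSup_left hsSup_right
  have hml : ∀ {x y : Q} (z : Q), x ≤ y → mul x z ≤ mul y z :=
    fun z h => qmul_mono_left mul hsSup_left hsSup_right z h
  have hmr : ∀ {x y : Q} (z : Q), x ≤ y → mul z x ≤ mul z y :=
    fun z h => qmul_mono_right mul hsSup_left hsSup_right z h
  rcases a with _|_|p <;> rcases b with _|_|q <;> rcases c with _|_|r <;>
    simp only [Mmul_e_left, Mmul_e_right, Mmul_top_top, Mmul_top_i, Mmul_i_top,
      Mmul_i_i, Option.some.injEq]
  · -- (⊤, ⊤, i r)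
    refine (sup_eq_right.2 ?_).symm
    rw [hsr]
    refine sup_le ?_ le_sup_left
    rw [← hassoc]
    exact (hml r le_top).trans le_sup_left
  · -- (⊤, i q, ⊤)
    rw [hsl, hsr, hassoc]
    ac_rfl
  · -- (⊤, i q, i r)
    rw [hsl, hassoc]
  · -- (i p, ⊤, ⊤)
    rw [hsl]
    refine sup_eq_right.2 (sup_le ?_ le_sup_left)
    rw [hassoc]
    exact (hmr p le_top).trans le_sup_left
  · -- (i p, ⊤, i r)
    rw [hsl, hsr, hassoc]
  · -- (i p, i q, ⊤)
    rw [hsr, hassoc]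
  · -- (i p, i q, i r)
    exact hassoc p q r

lemma Mmul_le_of_forall_left (ha : ∀ α : Q, mul γ α ⊔ mul α γ ≤ α)
    (hb1 : ∀ α β : Q, ¬ β ≤ γ → mul ⊤ α ≤ mul β α ⊔ α)
    (A : Set (M Q)) (b x : M Q) (hx : ∀ a ∈ A, Mle γ (Mmul mul a b) x) :
    Mle γ (Mmul mul (Msup γ A) b) x := by
  unfold Msup
  split_ifs with h1 h2
  · rcases h1 with h | ⟨he, q0, hq0, hq0γ⟩
    · exact hx none h
    · have hbx := hx _ he
      have hqx := hx _ hq0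
      simp only [Mmul_e_left] at hbx
      rcases b with _|_|r
      · simp only [Mmul_top_top]
        rcases x with _|_|y
        · trivial
        · exact (Mle_none_some _ hbx).elim
        · exact (Mle_none_some _ hbx).elim
      · simp only [Mmul_e_right] at hqx ⊢
        rcases x with _|_|y
        · trivial
        · exact absurd (hqx : q0 ≤ γ) hq0γ
        · exact (Mle_e_i _ hbx).elim
      · simp only [Mmul_top_i, Mmul_i_i] at hqx ⊢
        rcases x with _|_|y
        · trivial
        · exact sup_le ((hb1 r q0 hq0γ).trans (sup_le hqx hbx)) hbx
        · exact sup_le ((hb1 r q0 hq0γ).trans (sup_le hqx hbx)) hbx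
  · have := hx _ h2
    simpa using this
  · push_neg at h1
    rcases b with _|_|r
    · simp only [Mmul_i_top]
      have hgen : ∀ y : Q, (∀ q ∈ {q | some (some q) ∈ A}, mul q ⊤ ⊔ q ≤ y) →
          mul (sSup {q | some (some q) ∈ A}) ⊤ ⊔ sSup {q | some (some q) ∈ A} ≤ y := by
        intro y hy
        refine sup_le ?_ (sSup_le fun q hq => le_sup_right.trans (hy q hq))
        rw [hsSup_left]
        exact iSup₂_le fun q hq => le_sup_left.trans (hy q hq)
      rcases x with _|_|y
      · trivial
      · exact hgen γ fun q hq => by simpa using hx _ hq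
      · exact hgen y fun q hq => by simpa using hx _ hq
    · simp only [Mmul_e_right]
      rcases x with _|_|y
      · trivial
      · exact sSup_le fun q hq => show q ≤ γ by simpa using hx _ hq
      · exact sSup_le fun q hq => show q ≤ y by simpa using hx _ hq
    · simp only [Mmul_i_i]
      rcases x with _|_|y
      · trivial
      · show mul (sSup {q | some (some q) ∈ A}) r ≤ γ
        rw [hsSup_left]
        exact iSup₂_le fun q hq => by simpa using hx _ hq
      · show mul (sSup {q | some (some q) ∈ A}) r ≤ y
        rw [hsSup_left]
        exact iSup₂_le fun q hq => by simpa using hx _ hq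

lemma Mmul_le_of_forall_right (ha : ∀ α : Q, mul γ α ⊔ mul α γ ≤ α)
    (hb2 : ∀ α β : Q, ¬ β ≤ γ → mul α ⊤ ≤ mul α β ⊔ α)
    (A : Set (M Q)) (b x : M Q) (hx : ∀ a ∈ A, Mle γ (Mmul mul b a) x) :
    Mle γ (Mmul mul b (Msup γ A)) x := by
  unfold Msup
  split_ifs with h1 h2
  · rcases h1 with h | ⟨he, q0, hq0, hq0γ⟩
    · exact hx none h
    · have hbx := hx _ he
      have hqx := hx _ hq0
      simp only [Mmul_e_right] at hbx
      rcases b with _|_|r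
      · simp only [Mmul_top_top]
        rcases x with _|_|y
        · trivial
        · exact (Mle_none_some _ hbx).elim
        · exact (Mle_none_some _ hbx).elim
      · simp only [Mmul_e_left] at hqx ⊢
        rcases x with _|_|y
        · trivial
        · exact absurd (hqx : q0 ≤ γ) hq0γ
        · exact (Mle_e_i _ hbx).elim
      · simp only [Mmul_i_top, Mmul_i_i] at hqx ⊢
        rcases x with _|_|y
        · trivial
        · exact sup_le ((hb2 r q0 hq0γ).trans (sup_le hqx hbx)) hbx
        · exact sup_le ((hb2 r q0 hq0γ).trans (sup_le hqx hbx)) hbx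
  · have := hx _ h2
    simpa using this
  · push_neg at h1
    rcases b with _|_|r
    · simp only [Mmul_top_i]
      have hgen : ∀ y : Q, (∀ q ∈ {q | some (some q) ∈ A}, mul ⊤ q ⊔ q ≤ y) →
          mul ⊤ (sSup {q | some (some q) ∈ A}) ⊔ sSup {q | some (some q) ∈ A} ≤ y := by
        intro y hy
        refine sup_le ?_ (sSup_le fun q hq => le_sup_right.trans (hy q hq))
        rw [hsSup_right]
        exact iSup₂_le fun q hq => le_sup_left.trans (hy q hq)
      rcases x with _|_|y
      · trivial
      · exact hgen γ fun q hq => by simpa using hx _ hq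
      · exact hgen y fun q hq => by simpa using hx _ hq
    · simp only [Mmul_e_left]
      rcases x with _|_|y
      · trivial
      · exact sSup_le fun q hq => show q ≤ γ by simpa using hx _ hq
      · exact sSup_le fun q hq => show q ≤ y by simpa using hx _ hq
    · simp only [Mmul_i_i]
      rcases x with _|_|y
      · trivial
      · show mul r (sSup {q | some (some q) ∈ A}) ≤ γ
        rw [hsSup_right]
        exact iSup₂_le fun q hq => by simpa using hx _ hq
      · show mul r (sSup {q | some (some q) ∈ A}) ≤ y
        rw [hsSup_right]
        exact iSup₂_le fun q hq => by simpa using hx _ hq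

lemma Mmul_sSup_left (ha : ∀ α : Q, mul γ α ⊔ mul α γ ≤ α)
    (hb1 : ∀ α β : Q, ¬ β ≤ γ → mul ⊤ α ≤ mul β α ⊔ α)
    (A : Set (M Q)) (b : M Q) :
    Mmul mul (Msup γ A) b = Msup γ ((fun a => Mmul mul a b) '' A) := by
  letI := MPO γ
  have h1 := Msup_isLUB γ A
  have h2 := Msup_isLUB γ ((fun a => Mmul mul a b) '' A)
  apply le_antisymm
  · exact Mmul_le_of_forall_left mul hsSup_left hsSup_right ha hb1 A b _
      fun a haA => h2.1 (Set.mem_image_of_mem _ haA)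
  · refine h2.2 ?_
    rintro _ ⟨a, haA, rfl⟩
    exact Mmul_mono_left mul hsSup_left hsSup_right ha b (h1.1 haA)

lemma Mmul_sSup_right (ha : ∀ α : Q, mul γ α ⊔ mul α γ ≤ α)
    (hb2 : ∀ α β : Q, ¬ β ≤ γ → mul α ⊤ ≤ mul α β ⊔ α)
    (A : Set (M Q)) (b : M Q) :
    Mmul mul b (Msup γ A) = Msup γ ((fun a => Mmul mul b a) '' A) := by
  letI := MPO γ
  have h1 := Msup_isLUB γ A
  have h2 := Msup_isLUB γ ((fun a => Mmul mul b a) '' A)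
  apply le_antisymm
  · exact Mmul_le_of_forall_right mul hsSup_left hsSup_right ha hb2 A b _
      fun a haA => h2.1 (Set.mem_image_of_mem _ haA)
  · refine h2.2 ?_
    rintro _ ⟨a, haA, rfl⟩
    exact Mmul_mono_right mul hsSup_left hsSup_right ha b (h1.1 haA)

end

end Stmt10


open Stmt10 in
/-- A quantale `Q` with `γ ≠ ⊤` satisfying conditions (a) and (b)
extends to a unital quantale `M` obtained by adding an isolated unit `e`
(with `e⁻ = ι γ` and `e⁺ = ⊤`) and a new top, `Q` embedding as a subquantale. -/
theorem stmt_10 {Q : Type u} [CompleteLattice Q] (mul : Q → Q → Q)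
    (hassoc : ∀ a b c : Q, mul (mul a b) c = mul a (mul b c))
    (hsSup_left : ∀ (A : Set Q) (b : Q), mul (sSup A) b = ⨆ a ∈ A, mul a b)
    (hsSup_right : ∀ (A : Set Q) (b : Q), mul b (sSup A) = ⨆ a ∈ A, mul b a)
    (γ : Q) (hγ : γ ≠ ⊤)
    (ha : ∀ α : Q, mul γ α ⊔ mul α γ ≤ α)
    (hb : ∀ α β : Q, ¬ β ≤ γ →
      mul ⊤ α ≤ mul β α ⊔ α ∧ mul α ⊤ ≤ mul α β ⊔ α) :
    ∃ (M : Type u) (_ : CompleteLattice M) (mulM : M → M → M) (e : M) (ι : Q → M),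
      (∀ a b c : M, mulM (mulM a b) c = mulM a (mulM b c)) ∧
      (∀ (A : Set M) (b : M), mulM (sSup A) b = ⨆ a ∈ A, mulM a b) ∧
      (∀ (A : Set M) (b : M), mulM b (sSup A) = ⨆ a ∈ A, mulM b a) ∧
      (∀ m : M, mulM e m = m ∧ mulM m e = m) ∧
      Function.Injective ι ∧
      (∀ p q : Q, ι (mul p q) = mulM (ι p) (ι q)) ∧
      (∀ A : Set Q, ι (sSup A) = ⨆ a ∈ A, ι a) ∧
      (∀ A : Set Q, A.Nonempty → ι (sInf A) = ⨅ a ∈ A, ι a) ∧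
      (∀ m : M, m ∈ Set.range ι ∨ m = e ∨ m = ⊤) ∧
      e ∉ Set.range ι ∧ (⊤ : M) ∉ Set.range ι ∧ e ≠ ⊤ ∧
      ({m : M | m ≤ e} \ {e} = {m : M | m ≤ ι γ}) ∧
      ({m : M | e ≤ m} \ {e} = {(⊤ : M)}) := by
  classical
  refine ⟨M Q, MCL γ, Mmul mul, some none, fun q => some (some q),
    Mmul_assoc mul hsSup_left hsSup_right hassoc,
    ?_, ?_, ?_, ?_, ?_, ?_, ?_, ?_, ?_, ?_, ?_, ?_, ?_⟩
  · -- left distributivity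
    intro A b
    letI := MCL γ
    rw [← sSup_image]
    exact Mmul_sSup_left mul hsSup_left hsSup_right ha (fun α β h => (hb α β h).1) A b
  · -- right distributivity
    intro A b
    letI := MCL γ
    rw [← sSup_image]
    exact Mmul_sSup_right mul hsSup_left hsSup_right ha (fun α β h => (hb α β h).2) A b
  · exact fun m => ⟨Mmul_e_left mul m, Mmul_e_right mul m⟩
  · intro p q h
    simpa using h
  · exact fun p q => rfl
  · -- ι preserves sSup
    intro A
    letI := MCL γ
    rw [← sSup_image]
    have himg : {q | some (some q) ∈ (fun a => (some (some a) : M Q)) '' A} = A := by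
      ext q; simp
    show (some (some (sSup A)) : M Q) = Msup γ _
    unfold Msup
    rw [if_neg (by simp), if_neg (by simp), himg]
  · -- ι preserves nonempty sInf
    intro A hA
    obtain ⟨a0, ha0⟩ := hA
    letI := MCL γ
    rw [← sInf_image]
    have hlb : lowerBounds ((fun a => (some (some a) : M Q)) '' A)
        = (fun a => (some (some a) : M Q)) '' lowerBounds A := by
      ext x
      rcases x with _|_|y
      · constructor
        · intro h
          exact ((h (Set.mem_image_of_mem _ ha0) : Mle γ none (some (some a0)))).elim
        · rintro ⟨a, _, h⟩
          simp at h
      · constructor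
        · intro h
          exact ((h (Set.mem_image_of_mem _ ha0) : Mle γ (some none) (some (some a0)))).elim
        · rintro ⟨a, _, h⟩
          simp at h
      · constructor
        · intro h
          exact ⟨y, fun a haA =>
            (h (Set.mem_image_of_mem _ haA) : Mle γ (some (some y)) (some (some a))), rfl⟩
        · rintro ⟨z, hz, heq⟩ _ ⟨a, haA, rfl⟩
          have hy : y = z := by simpa using heq.symm
          show (y : Q) ≤ a
          rw [hy]
          exact hz haA
    have hSInf : sSup (lowerBounds A) = sInf A :=
      le_antisymm (sSup_le fun b hb => le_sInf fun a haA => hb haA)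
        (le_sSup fun a haA => sInf_le haA)
    have himg : {q | some (some q) ∈ (fun a => (some (some a) : M Q)) '' lowerBounds A}
        = lowerBounds A := by ext q; simp
    have hmain : Msup γ (lowerBounds ((fun a => (some (some a) : M Q)) '' A))
        = some (some (sInf A)) := by
      rw [hlb]
      unfold Msup
      rw [if_neg (by simp), if_neg (by simp), himg, hSInf]
    exact hmain.symm
  · -- trichotomy
    letI := MCL γ
    have htop : (⊤ : M Q) = none := by
      show Msup γ Set.univ = none
      unfold Msup
      rw [if_pos (Or.inl (Set.mem_univ _))]
    rintro (_|_|q)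
    · exact Or.inr (Or.inr htop.symm)
    · exact Or.inr (Or.inl rfl)
    · exact Or.inl ⟨q, rfl⟩
  · rintro ⟨q, h⟩
    simp at h
  · letI := MCL γ
    have htop : (⊤ : M Q) = none := by
      show Msup γ Set.univ = none
      unfold Msup
      rw [if_pos (Or.inl (Set.mem_univ _))]
    rintro ⟨q, h⟩
    rw [htop] at h
    simp at h
  · letI := MCL γ
    have htop : (⊤ : M Q) = none := by
      show Msup γ Set.univ = none
      unfold Msup
      rw [if_pos (Or.inl (Set.mem_univ _))]
    intro h
    rw [htop] at h
    simp at h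
  · -- down-set of e minus e
    letI := MCL γ
    apply Set.ext
    rintro (_|_|y)
    · exact ⟨fun ⟨h, _⟩ => ((h : Mle γ none (some none))).elim,
        fun h => ((h : Mle γ none (some (some γ)))).elim⟩
    · exact ⟨fun ⟨_, h⟩ => absurd rfl h,
        fun h => ((h : Mle γ (some none) (some (some γ)))).elim⟩
    · exact ⟨fun ⟨h, _⟩ => (h : Mle γ (some (some y)) (some none)),
        fun h => ⟨(h : Mle γ (some (some y)) (some (some γ))),
          fun heq => by simp at heq⟩⟩
  · -- up-set of e minus e
    letI := MCL γ
    have htop : (⊤ : M Q) = none := by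
      show Msup γ Set.univ = none
      unfold Msup
      rw [if_pos (Or.inl (Set.mem_univ _))]
    apply Set.ext
    rintro (_|_|y)
    · constructor
      · intro _
        show (none : M Q) = ⊤
        rw [htop]
      · intro _
        exact ⟨(trivial : Mle γ (some none) none), fun heq => by simp at heq⟩
    · constructor
      · rintro ⟨_, h⟩
        exact absurd rfl h
      · intro h
        rw [Set.mem_singleton_iff, htop] at h
        simp at h
    · constructor
      · rintro ⟨h, _⟩
        exact ((h : Mle γ (some none) (some (some y)))).elim
      · intro h
        rw [Set.mem_singleton_iff, htop] at h
        simp at h
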